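/- If (C₀,C₁) is an equitable 2-partition of the halved n-cube with quotient matrix [[a,b],[c,d]], then (b+c)/gcd(b,c) divides 2^{n−1}; in particular (b+c)/gcd(b,c) is a power of 2. -/

import Mathlib

open Finset

/-- The hypercube graph on binary words indexed by `ι`. -/
def cube (ι : Type*) [Fintype ι] [DecidableEq ι] : SimpleGraph (ι → ZMod 2) where
  Adj x y := hammingDist x y = 1
  symm := ⟨fun (x y : ι → ZMod 2) h => (hammingDist_comm y x).trans h⟩
  loopless := ⟨fun x h => absurd ((hammingDist_self x).symm.trans h) (by decide)⟩

instance (ι : Type*) [Fintype ι] [DecidableEq ι] : DecidableRel (cube ι).Adj :=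
  fun x y => inferInstanceAs (Decidable (hammingDist x y = 1))

/-- The halved hypercube: even-weight words, adjacent iff Hamming distance 2. -/
def halvedCube (ι : Type*) [Fintype ι] [DecidableEq ι] :
    SimpleGraph {x : ι → ZMod 2 // Even (hammingDist x 0)} where
  Adj x y := hammingDist x.1 y.1 = 2
  symm := ⟨fun (x y : {x : ι → ZMod 2 // Even (hammingDist x 0)}) h =>
    (hammingDist_comm y.1 x.1).trans h⟩
  loopless := ⟨fun x h => absurd ((hammingDist_self x.1).symm.trans h) (by decide)⟩

instance (ι : Type*) [Fintype ι] [DecidableEq ι] : DecidableRel (halvedCube ι).Adj :=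
  fun x y => inferInstanceAs (Decidable (hammingDist x.1 y.1 = 2))

variable {V : Type*} [Fintype V] [DecidableEq V]

/-- Number of neighbors of `v` in the set `C`. -/
def nbrCount (G : SimpleGraph V) [DecidableRel G.Adj] (v : V) (C : Finset V) : ℕ :=
  (C.filter (G.Adj v)).card

/-- `(C0, C1)` is an equitable 2-partition with quotient matrix `[[a,b],[c,d]]`. -/
def IsEquitable2 (G : SimpleGraph V) [DecidableRel G.Adj] (C0 C1 : Finset V)
    (a b c d : ℕ) : Prop :=
  Disjoint C0 C1 ∧ C0 ∪ C1 = Finset.univ ∧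
  (∀ v ∈ C0, nbrCount G v C0 = a ∧ nbrCount G v C1 = b) ∧
  (∀ v ∈ C1, nbrCount G v C0 = c ∧ nbrCount G v C1 = d)

/-- `C` is an equitable `k`-partition with quotient matrix `S`. -/
def IsEquitableK (G : SimpleGraph V) [DecidableRel G.Adj] {k : ℕ}
    (C : V → Fin k) (S : Fin k → Fin k → ℕ) : Prop :=
  ∀ (v : V) (j : Fin k),
    (Finset.univ.filter (fun w => G.Adj v w ∧ C w = j)).card = S (C v) j

/-! ### Auxiliary lemmas -/

private lemma zmod2_if (a b : ZMod 2) : ((if a ≠ b then 1 else 0 : ℕ) : ZMod 2) = a + b := by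
  revert a b; decide

private lemma zmod2_cases (a : ZMod 2) : a = 0 ∨ a = 1 := by revert a; decide

private lemma zmod2_add_self (a : ZMod 2) : a + a = 0 := by revert a; decide

private lemma zmod2_add_eq_zero (a b : ZMod 2) : a + b = 0 ↔ a = b := by revert a b; decide

/-- Parity of the Hamming distance via a sum in `ZMod 2`. -/
lemma castDist {n : ℕ} (x y : Fin n → ZMod 2) :
    ((hammingDist x y : ℕ) : ZMod 2) = (∑ i, x i) + ∑ i, y i := by
  rw [show hammingDist x y = (Finset.univ.filter fun i => x i ≠ y i).card from rfl,
    Finset.card_filter, Nat.cast_sum, ← Finset.sum_add_distrib]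
  exact Finset.sum_congr rfl fun i _ => zmod2_if _ _

lemma even_iff_cast2 {m : ℕ} : Even m ↔ ((m : ZMod 2) = 0) := by
  rw [ZMod.natCast_eq_zero_iff, even_iff_two_dvd]

lemma even_hamming_iff {n : ℕ} (x y : Fin n → ZMod 2) :
    Even (hammingDist x y) ↔ (∑ i, x i) = ∑ i, y i := by
  rw [even_iff_cast2, castDist, zmod2_add_eq_zero]

/-- Flipping two coordinates where `x` and `y` differ. -/
lemma flip_step {n : ℕ} (x y : Fin n → ZMod 2) (h : 2 ≤ hammingDist x y) :
    ∃ x' : Fin n → ZMod 2, hammingDist x x' = 2 ∧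
      hammingDist x' y = hammingDist x y - 2 := by
  classical
  have hcard : (Finset.univ.filter fun i => x i ≠ y i).card = hammingDist x y := rfl
  obtain ⟨i, hi, j, hj, hij⟩ := Finset.one_lt_card.mp
    (show 1 < (Finset.univ.filter fun i => x i ≠ y i).card by omega)
  have hxi : x i ≠ y i := (Finset.mem_filter.mp hi).2
  have hxj : x j ≠ y j := (Finset.mem_filter.mp hj).2
  set x' := Function.update (Function.update x i (y i)) j (y j) with hx'
  have happ : ∀ k, x' k = if k = j then y j else if k = i then y i else x k := by
    intro k
    simp [hx', Function.update_apply]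
  refine ⟨x', ?_, ?_⟩
  · have hset : (Finset.univ.filter fun k => x k ≠ x' k) = {i, j} := by
      ext k
      simp only [Finset.mem_filter, Finset.mem_univ, true_and, Finset.mem_insert,
        Finset.mem_singleton, happ]
      rcases eq_or_ne k j with rfl | hkj
      · simp [hxj]
      · rcases eq_or_ne k i with rfl | hki
        · simp [hkj, hxi]
        · simp [hkj, hki]
    rw [show hammingDist x x' = (Finset.univ.filter fun k => x k ≠ x' k).card from rfl,
      hset, Finset.card_pair hij]
  · have hset : (Finset.univ.filter fun k => x' k ≠ y k)
        = ((Finset.univ.filter fun k => x k ≠ y k).erase j).erase i := by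
      ext k
      simp only [Finset.mem_erase, Finset.mem_filter, Finset.mem_univ, true_and, happ]
      rcases eq_or_ne k j with rfl | hkj
      · simp
      · rcases eq_or_ne k i with rfl | hki
        · simp [hkj, hij]
        · simp [hkj, hki]
    have hiej : i ∈ (Finset.univ.filter fun k => x k ≠ y k).erase j :=
      Finset.mem_erase.mpr ⟨hij, hi⟩
    rw [show hammingDist x' y = (Finset.univ.filter fun k => x' k ≠ y k).card from rfl,
      hset, Finset.card_erase_of_mem hiej, Finset.card_erase_of_mem hj, hcard]
    omega

/-- The halved cube on `n ≥ 1` coordinates has `2^(n-1)` vertices. -/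
lemma halvedCube_card (n : ℕ) (hn : 1 ≤ n) :
    Fintype.card {x : Fin n → ZMod 2 // Even (hammingDist x 0)} = 2 ^ (n - 1) := by
  classical
  set δ : Fin n → ZMod 2 := Pi.single ⟨0, hn⟩ 1 with hδ
  have hfδ : (∑ i, δ i) = 1 := by rw [hδ]; exact Fintype.sum_pi_single' _ _
  have hsum : ∀ x : Fin n → ZMod 2, (∑ i, (x + δ) i) = (∑ i, x i) + 1 := by
    intro x
    simp only [Pi.add_apply]
    rw [Finset.sum_add_distrib, hfδ]
  have hpar : ∀ x : Fin n → ZMod 2, Even (hammingDist x 0) ↔ (∑ i, x i) = 0 := by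
    intro x
    rw [even_hamming_iff]
    simp
  have hdd : δ + δ = 0 := by funext i; exact zmod2_add_self _
  have hinv : ∀ x : Fin n → ZMod 2, x + δ + δ = x := by
    intro x; rw [add_assoc, hdd, add_zero]
  have hEO : (Finset.univ.filter fun x : Fin n → ZMod 2 => Even (hammingDist x 0)).card
      = (Finset.univ.filter fun x : Fin n → ZMod 2 => ¬ Even (hammingDist x 0)).card := by
    apply Finset.card_nbij' (fun x => x + δ) (fun x => x + δ)
    · intro x hx
      simp only [Finset.mem_coe, Finset.mem_filter, Finset.mem_univ, true_and] at hx ⊢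
      rw [hpar] at hx ⊢
      rw [hsum, hx]
      decide
    · intro x hx
      simp only [Finset.mem_coe, Finset.mem_filter, Finset.mem_univ, true_and] at hx ⊢
      rw [hpar] at hx ⊢
      rw [hsum]
      rcases zmod2_cases (∑ i, x i) with h1 | h1
      · exact absurd h1 hx
      · rw [h1]; decide
    · intro x _; exact hinv x
    · intro x _; exact hinv x
  have htot : (Finset.univ.filter fun x : Fin n → ZMod 2 => Even (hammingDist x 0)).card
      + (Finset.univ.filter fun x : Fin n → ZMod 2 => ¬ Even (hammingDist x 0)).card
      = 2 ^ n := by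
    rw [Finset.card_filter_add_card_filter_not, Finset.card_univ, Fintype.card_fun]
    simp
  have hpow : 2 ^ n = 2 * 2 ^ (n - 1) := by
    conv_lhs => rw [show n = (n - 1) + 1 by omega]
    rw [pow_succ]; ring
  rw [Fintype.card_subtype]
  omega

/-- if `(C₀,C₁)` is an equitable 2-partition of the halved
`n`-cube (with nonempty cells) and quotient matrix `[[a,b],[c,d]]`, then
`(b+c)/gcd(b,c)` divides `2^{n-1}`; in particular it is a power of 2. -/
theorem stmt18 (n : ℕ) (a b c d : ℕ)
    (C0 C1 : Finset {x : Fin n → ZMod 2 // Even (hammingDist x 0)})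
    (h0 : C0.Nonempty) (h1 : C1.Nonempty)
    (hEq : IsEquitable2 (halvedCube (Fin n)) C0 C1 a b c d) :
    ((b + c) / Nat.gcd b c) ∣ 2 ^ (n - 1) ∧ ∃ m : ℕ, (b + c) / Nat.gcd b c = 2 ^ m := by
  classical
  obtain ⟨hdisj, huniv, hB0, hB1⟩ := hEq
  -- cardinality of the two cells
  have hcardsum : C0.card + C1.card
      = Fintype.card {x : Fin n → ZMod 2 // Even (hammingDist x 0)} := by
    rw [← Finset.card_union_of_disjoint hdisj, huniv, Finset.card_univ]
  obtain ⟨v₀, hv₀⟩ := h0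
  obtain ⟨w₀, hw₀⟩ := h1
  have hc0 : 1 ≤ C0.card := Finset.card_pos.mpr ⟨v₀, hv₀⟩
  have hc1 : 1 ≤ C1.card := Finset.card_pos.mpr ⟨w₀, hw₀⟩
  have hn : 1 ≤ n := by
    by_contra hnn
    have hn0 : n = 0 := by omega
    subst hn0
    have hle : Fintype.card {x : Fin 0 → ZMod 2 // Even (hammingDist x 0)}
        ≤ Fintype.card (Fin 0 → ZMod 2) := Fintype.card_subtype_le _
    have : Fintype.card (Fin 0 → ZMod 2) = 1 := by
      rw [Fintype.card_fun]; simp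
    omega
  have hN := halvedCube_card n hn
  have hfv : ∀ z : {x : Fin n → ZMod 2 // Even (hammingDist x 0)}, (∑ i, z.1 i) = 0 := by
    intro z
    have := (even_hamming_iff z.1 0).mp z.2
    simpa using this
  -- double counting of edges between the two cells
  have hdc : C0.card * b = C1.card * c := by
    have key : ∑ v ∈ C0, ((C1.filter ((halvedCube (Fin n)).Adj v)).card)
        = ∑ w ∈ C1, ((C0.filter ((halvedCube (Fin n)).Adj w)).card) := by
      simp only [Finset.card_filter]
      rw [Finset.sum_comm]
      exact Finset.sum_congr rfl fun w _ => Finset.sum_congr rfl fun v _ => by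
        simp only [(halvedCube (Fin n)).adj_comm v w]
    calc C0.card * b = ∑ _v ∈ C0, b := by rw [Finset.sum_const, smul_eq_mul]
      _ = ∑ v ∈ C0, ((C1.filter ((halvedCube (Fin n)).Adj v)).card) :=
          Finset.sum_congr rfl fun v hv => ((hB0 v hv).2).symm
      _ = ∑ w ∈ C1, ((C0.filter ((halvedCube (Fin n)).Adj w)).card) := key
      _ = ∑ w ∈ C1, c := Finset.sum_congr rfl fun w hw => (hB1 w hw).1
      _ = C1.card * c := by rw [Finset.sum_const, smul_eq_mul]
  -- there is a crossing edge, by (essentially) connectivity of the halved cube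
  have main : ∀ dB : ℕ, ∀ v w, v ∈ C0 → w ∈ C1 → hammingDist v.1 w.1 ≤ dB →
      ∃ p ∈ C0, ∃ q ∈ C1, (halvedCube (Fin n)).Adj p q := by
    intro dB
    induction dB with
    | zero =>
      intro v w hv hw hd
      have hvw : v = w := Subtype.ext (hammingDist_eq_zero.mp (by omega))
      exact absurd (hvw ▸ hw) (Finset.disjoint_left.mp hdisj hv)
    | succ dB ih =>
      intro v w hv hw hd
      have hne : v.1 ≠ w.1 := fun h =>
        Finset.disjoint_left.mp hdisj hv ((Subtype.ext h : v = w) ▸ hw)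
      have hd0 : hammingDist v.1 w.1 ≠ 0 := fun h => hne (hammingDist_eq_zero.mp h)
      have heven : Even (hammingDist v.1 w.1) := by
        rw [even_hamming_iff, hfv v, hfv w]
      have h2 : 2 ≤ hammingDist v.1 w.1 := by
        rcases heven with ⟨k, hk⟩; omega
      rcases eq_or_ne (hammingDist v.1 w.1) 2 with h2' | hgt
      · exact ⟨v, hv, w, hw, h2'⟩
      · obtain ⟨x', hx1, hx2⟩ := flip_step v.1 w.1 h2
        have hx'even : Even (hammingDist x' (0 : Fin n → ZMod 2)) := by
          rw [even_hamming_iff]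
          have hvx : (∑ i, v.1 i) = ∑ i, x' i :=
            (even_hamming_iff v.1 x').mp (by rw [hx1]; exact ⟨1, rfl⟩)
          simp [← hvx, hfv v]
        refine ?_
        set v' : {x : Fin n → ZMod 2 // Even (hammingDist x 0)} := ⟨x', hx'even⟩ with hv'def
        have hmem : v' ∈ C0 ∪ C1 := by rw [huniv]; exact Finset.mem_univ v'
        rcases Finset.mem_union.mp hmem with hv' | hv'
        · exact ih v' w hv' hw (by show hammingDist x' w.1 ≤ dB; omega)
        · exact ⟨v, hv, v', hv', by show hammingDist v.1 x' = 2; exact hx1⟩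
  obtain ⟨p, hp, q, hq, hpq⟩ := main _ v₀ w₀ hv₀ hw₀ le_rfl
  have hb : 1 ≤ b := by
    have hbp := (hB0 p hp).2
    have : 0 < (C1.filter ((halvedCube (Fin n)).Adj p)).card :=
      Finset.card_pos.mpr ⟨q, Finset.mem_filter.mpr ⟨hq, hpq⟩⟩
    rw [← hbp]; exact this
  have hc : 1 ≤ c := by
    have hcq := (hB1 q hq).1
    have : 0 < (C0.filter ((halvedCube (Fin n)).Adj q)).card :=
      Finset.card_pos.mpr ⟨p, Finset.mem_filter.mpr ⟨hp, (halvedCube (Fin n)).adj_symm hpq⟩⟩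
    rw [← hcq]; exact this
  -- the arithmetic
  set g := Nat.gcd b c with hg
  have hgpos : 0 < g := Nat.gcd_pos_of_pos_left _ (by omega)
  set b' := b / g with hb'
  set c' := c / g with hc'
  have hbb : b = g * b' := (Nat.mul_div_cancel' (Nat.gcd_dvd_left b c)).symm
  have hcc : c = g * c' := (Nat.mul_div_cancel' (Nat.gcd_dvd_right b c)).symm
  have hcop : Nat.Coprime b' c' := Nat.coprime_div_gcd_div_gcd hgpos
  have hdivq : (b + c) / g = b' + c' := by
    rw [hbb, hcc, ← Nat.mul_add, Nat.mul_div_cancel_left _ hgpos]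
  have hdc' : C0.card * b' = C1.card * c' := by
    apply Nat.eq_of_mul_eq_mul_left hgpos
    calc g * (C0.card * b') = C0.card * (g * b') := by ring
      _ = C1.card * (g * c') := by rw [← hbb, ← hcc]; exact hdc
      _ = g * (C1.card * c') := by ring
  have hdvd : (b' + c') ∣ 2 ^ (n - 1) := by
    have h1 : (b' + c') * C0.card = c' * (2 ^ (n - 1)) := by
      rw [← hN, ← hcardsum]
      calc (b' + c') * C0.card = C0.card * b' + c' * C0.card := by ring
        _ = C1.card * c' + c' * C0.card := by rw [hdc']
        _ = c' * (C0.card + C1.card) := by ring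
    have h2 : (b' + c') ∣ c' * (2 ^ (n - 1)) := ⟨C0.card, h1.symm⟩
    have hcop' : Nat.Coprime (b' + c') c' := Nat.coprime_add_self_left.mpr hcop
    exact hcop'.dvd_of_dvd_mul_left h2
  refine ⟨by rw [hdivq]; exact hdvd, ?_⟩
  obtain ⟨m, -, hm⟩ := (Nat.dvd_prime_pow Nat.prime_two).mp hdvd
  exact ⟨m, by rw [hdivq]; exact hm⟩
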